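/- Let A be a commutative *-subalgebra of Matrix n n ℂ (closed under adjoints, containing 1). Then all elements of A are simultaneously diagonalizable: there exists a unitary U such that U* * a * U is diagonal for every a ∈ A. -/

import Mathlib

open scoped Matrix

set_option maxHeartbeats 1000000 in
theorem stmt_13 {n : Type*} [Fintype n] [DecidableEq n]
    (A : StarSubalgebra ℂ (Matrix n n ℂ))
    (hcomm : ∀ a ∈ A, ∀ b ∈ A, a * b = b * a) :
    ∃ U : Matrix.unitaryGroup n ℂ,
      ∀ a ∈ A, ((U : Matrix n n ℂ)ᴴ * a * (U : Matrix n n ℂ)).IsDiag := by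
  classical
  -- index type: hermitian elements of `A`
  let ι := {x : Matrix n n ℂ // x ∈ A ∧ x.IsHermitian}
  let T : ι → Module.End ℂ (EuclideanSpace ℂ n) := fun i => Matrix.toEuclideanLin i.1
  have hT : ∀ i, (T i).IsSymmetric := fun i =>
    Matrix.isHermitian_iff_isSymmetric.mp i.2.2
  have hcomp : ∀ (x y : Matrix n n ℂ) (v : EuclideanSpace ℂ n),
      Matrix.toEuclideanLin x (Matrix.toEuclideanLin y v) =
        Matrix.toEuclideanLin (x * y) v := by
    intro x y v
    simp [Matrix.toEuclideanLin_apply, Matrix.mulVec_mulVec]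
  have hC : Pairwise (Function.onFun Commute T) := by
    intro i j _
    have h := hcomm i.1 i.2.1 j.1 j.2.1
    simp only [Commute, SemiconjBy, Function.onFun]
    refine LinearMap.ext fun v => ?_
    rw [Module.End.mul_apply, Module.End.mul_apply]
    show Matrix.toEuclideanLin i.1 (Matrix.toEuclideanLin j.1 v) =
      Matrix.toEuclideanLin j.1 (Matrix.toEuclideanLin i.1 v)
    rw [hcomp, hcomp, h]
  -- joint eigenspaces
  set V : (ι → ℂ) → Submodule ℂ (EuclideanSpace ℂ n) :=
    fun χ => ⨅ j, Module.End.eigenspace (T j) (χ j) with hV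
  have hint : DirectSum.IsInternal V :=
    LinearMap.IsSymmetric.LinearMap.IsSymmetric.directSum_isInternal_of_pairwise_commute hT hC
  have hfam := LinearMap.IsSymmetric.orthogonalFamily_iInf_eigenspaces hT
  -- restrict to the nonzero joint eigenspaces, of which there are finitely many
  let κ := {χ : ι → ℂ // V χ ≠ ⊥}
  haveI : Fintype κ := hint.submodule_iSupIndep.fintypeNeBotOfFiniteDimensional
  have hint' : DirectSum.IsInternal (fun χ : κ => V χ.1) :=
    (DirectSum.isInternal_ne_bot_iff).mpr hint
  have hfam' := hfam.comp (f := (Subtype.val : κ → (ι → ℂ))) Subtype.coe_injective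
  have hn : Module.finrank ℂ (EuclideanSpace ℂ n) = Fintype.card n :=
    finrank_euclideanSpace
  let e : Fin (Fintype.card n) ≃ n := (Fintype.equivFin n).symm
  let b : OrthonormalBasis n ℂ (EuclideanSpace ℂ n) :=
    (hint'.subordinateOrthonormalBasis hn hfam').reindex e
  -- each basis vector is a joint eigenvector of all hermitian elements of `A`
  have hb : ∀ (i : ι) (k : n), ∃ μ : ℂ, Matrix.toEuclideanLin i.1 (b k) = μ • b k := by
    intro i k
    have hmem := hint'.subordinateOrthonormalBasis_subordinate hn (e.symm k) hfam'
    have hbk : b k = hint'.subordinateOrthonormalBasis hn hfam' (e.symm k) := by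
      simp [b, OrthonormalBasis.reindex_apply]
    rw [hbk]
    refine ⟨(hint'.subordinateOrthonormalBasisIndex hn (e.symm k) hfam').1 i, ?_⟩
    exact Module.End.mem_eigenspace_iff.mp ((Submodule.mem_iInf _).mp hmem i)
  -- coordinates of the basis vectors
  set c : n → n → ℂ := fun k => (WithLp.equiv 2 (n → ℂ)) (b k) with hc
  -- every element of `A` has the basis vectors as eigenvectors (in `mulVec` form)
  have key : ∀ a ∈ A, ∀ k : n, ∃ μ : ℂ, a *ᵥ c k = μ • c k := by
    intro a ha k
    set h1 : Matrix n n ℂ := (2⁻¹ : ℂ) • (a + aᴴ) with hh1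
    set h2 : Matrix n n ℂ := (Complex.I / 2) • (aᴴ - a) with hh2
    have h1A : h1 ∈ A := SMulMemClass.smul_mem _ (add_mem ha (star_mem ha))
    have h2A : h2 ∈ A := SMulMemClass.smul_mem _ (sub_mem (star_mem ha) ha)
    have h1H : h1.IsHermitian := by
      unfold Matrix.IsHermitian
      rw [hh1, Matrix.conjTranspose_smul, Matrix.conjTranspose_add,
        Matrix.conjTranspose_conjTranspose]
      rw [show star (2⁻¹ : ℂ) = 2⁻¹ by simp]
      rw [add_comm]
    have h2H : h2.IsHermitian := by
      unfold Matrix.IsHermitian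
      rw [hh2, Matrix.conjTranspose_smul, Matrix.conjTranspose_sub,
        Matrix.conjTranspose_conjTranspose]
      rw [show star (Complex.I / 2 : ℂ) = -(Complex.I / 2) by
        simp [Complex.star_def, Complex.conj_I]; ring]
      rw [neg_smul, ← smul_neg, neg_sub]
    have hdecomp : a = h1 + Complex.I • h2 := by
      rw [hh1, hh2, smul_smul]
      have hI : Complex.I * (Complex.I / 2) = -(2⁻¹ : ℂ) := by
        rw [mul_div_assoc', Complex.I_mul_I]; ring
      rw [hI]
      ext i j
      simp [Matrix.add_apply, Matrix.smul_apply, Matrix.sub_apply]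
      ring
    obtain ⟨μ1, hμ1⟩ := hb ⟨h1, h1A, h1H⟩ k
    obtain ⟨μ2, hμ2⟩ := hb ⟨h2, h2A, h2H⟩ k
    have hm1 : h1 *ᵥ c k = μ1 • c k := by
      have := congrArg (WithLp.equiv 2 (n → ℂ)) hμ1
      simpa [Matrix.toEuclideanLin_apply, hc] using this
    have hm2 : h2 *ᵥ c k = μ2 • c k := by
      have := congrArg (WithLp.equiv 2 (n → ℂ)) hμ2
      simpa [Matrix.toEuclideanLin_apply, hc] using this
    refine ⟨μ1 + Complex.I * μ2, ?_⟩
    rw [hdecomp, Matrix.add_mulVec, hm1, Matrix.smul_mulVec, hm2,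
      smul_smul, add_smul]
  -- the unitary whose columns are the basis vectors
  refine ⟨⟨Matrix.of fun i j => c j i, ?_⟩, ?_⟩
  · have hU : (Matrix.of fun i j => c j i) =
        (EuclideanSpace.basisFun n ℂ).toBasis.toMatrix b.toBasis := by
      ext i j
      simp [Module.Basis.toMatrix_apply, OrthonormalBasis.coe_toBasis,
        OrthonormalBasis.coe_toBasis_repr_apply, EuclideanSpace.basisFun_repr, hc]
    rw [hU]
    exact (EuclideanSpace.basisFun n ℂ).toMatrix_orthonormalBasis_mem_unitary b
  · intro a ha j k hjk
    obtain ⟨μ, hμ⟩ := key a ha k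
    have horth : (∑ i, (starRingEnd ℂ) (c j i) * c k i) = 0 := by
      have hbo := b.orthonormal.2 hjk
      simpa [PiLp.inner_apply, RCLike.inner_apply, hc, mul_comm] using hbo
    have hcol : ∀ i, (∑ l, a i l * c k l) = μ * c k i := by
      intro i
      have := congrFun hμ i
      simpa [Matrix.mulVec, dotProduct, Pi.smul_apply, smul_eq_mul] using this
    have hgoal : ((Matrix.of fun i j => c j i)ᴴ * a * (Matrix.of fun i j => c j i)) j k
        = 0 := by
      calc ((Matrix.of fun i j => c j i)ᴴ * a * (Matrix.of fun i j => c j i)) j k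
          = ∑ l, (∑ i, (starRingEnd ℂ) (c j i) * a i l) * c k l := by
            simp [Matrix.mul_apply, Matrix.conjTranspose_apply, Complex.star_def]
        _ = ∑ l, ∑ i, (starRingEnd ℂ) (c j i) * (a i l * c k l) := by
            refine Finset.sum_congr rfl fun l _ => ?_
            rw [Finset.sum_mul]
            exact Finset.sum_congr rfl fun i _ => by ring
        _ = ∑ i, (starRingEnd ℂ) (c j i) * (∑ l, a i l * c k l) := by
            rw [Finset.sum_comm]
            exact Finset.sum_congr rfl fun i _ => by rw [Finset.mul_sum]
        _ = μ * ∑ i, (starRingEnd ℂ) (c j i) * c k i := by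
            rw [Finset.mul_sum]
            refine Finset.sum_congr rfl fun i _ => ?_
            rw [hcol i]; ring
        _ = 0 := by rw [horth, mul_zero]
    exact hgoal
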